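/- arXiv:2508.20003 — 3 statements merged into one kernel-verified Lean document; each statement's English description precedes it below -/
import Mathlib

section
/- Fix a positive integer M, a natural number K, complex column vectors h_1,…,h_K ∈ ℂ^M, and a real constant c > 0. Let k ∈ {1,…,K} and let T_o ⊆ T_p be subsets of {1,…,K} with k ∉ T_p. Then R_k^{T_o} ≥ R_k^{T_p}; equivalently, in determinant form, det(I_M + c(h_k h_k^H + G_{T_o})) · det(I_M + c G_{T_p}) ≥ det(I_M + c G_{T_o}) · det(I_M + c(h_k h_k^H + G_{T_p})) (all four determinants being positive reals). In words: enlarging the set of interferers can only decrease the achievable rate of user k. -/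
open Matrix BigOperators

/-- `gram h T = ∑ k ∈ T, h k (h k)^H`, the Gram (interference covariance) matrix of the
channel vectors of the users in `T`. -/
noncomputable def gram {M K : ℕ} (h : Fin K → Fin M → ℂ)
    (T : Finset (Fin K)) : Matrix (Fin M) (Fin M) ℂ :=
  ∑ k ∈ T, Matrix.vecMulVec (h k) (star (h k))

/-- Achievable (sum) rate of the user group `S` under interference from the user group `T`:
`R_S^T = log₂ (det (I + c (G_S + G_T)) / det (I + c G_T))`, both determinants being
positive reals (as determinants of `I` plus a positive semidefinite Hermitian matrix). -/
noncomputable def rate {M K : ℕ} (h : Fin K → Fin M → ℂ) (c : ℝ)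
    (S T : Finset (Fin K)) : ℝ :=
  Real.logb 2
    (((1 + (c : ℂ) • (gram h S + gram h T)).det).re /
      ((1 + (c : ℂ) • gram h T).det).re)

open scoped ComplexOrder

section Aux

variable {M : ℕ}

lemma aux_vecMulVec_posSemidef (u : Fin M → ℂ) :
    (Matrix.vecMulVec u (star u)).PosSemidef := by
  rw [Matrix.vecMulVec_eq (Fin 1)]
  have : Matrix.replicateRow (Fin 1) (star u) = (Matrix.replicateCol (Fin 1) u)ᴴ := by
    ext i j; simp [Matrix.replicateRow, Matrix.replicateCol]
  rw [this]
  exact Matrix.posSemidef_self_mul_conjTranspose _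

lemma aux_gram_posSemidef {K : ℕ} (h : Fin K → Fin M → ℂ) (T : Finset (Fin K)) :
    (gram h T).PosSemidef := by
  unfold _root_.gram
  refine Finset.sum_induction _ _ (fun a b ha hb => ha.add hb) Matrix.PosSemidef.zero ?_
  intro k _
  exact aux_vecMulVec_posSemidef (h k)

lemma aux_smul_posSemidef {c : ℝ} (hc : 0 ≤ c) {A : Matrix (Fin M) (Fin M) ℂ}
    (hA : A.PosSemidef) : ((c : ℂ) • A).PosSemidef := by
  refine Matrix.PosSemidef.of_dotProduct_mulVec_nonneg ?_ ?_
  · have := hA.1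
    unfold Matrix.IsHermitian at this ⊢
    rw [Matrix.conjTranspose_smul, this]
    congr 1
    simp [Complex.star_def, Complex.conj_ofReal]
  · intro x
    rw [Matrix.smul_mulVec, dotProduct_smul]
    have hc' : (0 : ℂ) ≤ (c : ℂ) := by
      rw [Complex.le_def]; simp [hc]
    exact mul_nonneg hc' (hA.dotProduct_mulVec_nonneg x)

lemma aux_one_add_posDef {c : ℝ} (hc : 0 ≤ c) {G : Matrix (Fin M) (Fin M) ℂ}
    (hG : G.PosSemidef) : (1 + (c : ℂ) • G).PosDef :=
  Matrix.PosDef.add_posSemidef Matrix.PosDef.one (aux_smul_posSemidef hc hG)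

open scoped MatrixOrder in
/-- Inverse is antitone on positive definite matrices (Loewner order). -/
lemma aux_inv_sub_inv_posSemidef {A B : Matrix (Fin M) (Fin M) ℂ}
    (hA : A.PosDef) (hB : B.PosDef) (hBA : (B - A).PosSemidef) :
    (A⁻¹ - B⁻¹).PosSemidef := by
  set R := CFC.sqrt A with hRdef
  have hR2 : R * R = A := CFC.sqrt_mul_sqrt_self A hA.posSemidef.nonneg
  have hRH : R.IsHermitian := (CFC.sqrt_nonneg A).posSemidef.1
  have hRdet : IsUnit R.det := by
    have h1 : R.det * R.det = A.det := by rw [← Matrix.det_mul, hR2]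
    have h2 : IsUnit A.det := hA.det_pos.ne'.isUnit
    rw [← h1] at h2
    exact isUnit_of_mul_isUnit_left h2
  have hRR : R * R⁻¹ = 1 := Matrix.mul_nonsing_inv R hRdet
  have hRR' : R⁻¹ * R = 1 := Matrix.nonsing_inv_mul R hRdet
  have hRiH : R⁻¹.IsHermitian := hRH.inv
  set C := R⁻¹ * (B - A) * R⁻¹ with hCdef
  have hC : C.PosSemidef := by
    have := hBA.mul_mul_conjTranspose_same R⁻¹
    rwa [hRiH.eq] at this
  have h1C : (1 + C).PosDef := Matrix.PosDef.add_posSemidef Matrix.PosDef.one hC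
  have hBeq : B = R * (1 + C) * R := by
    have : R * (R⁻¹ * (B - A) * R⁻¹) * R = (R * R⁻¹) * (B - A) * (R⁻¹ * R) := by
      noncomm_ring
    rw [hCdef, Matrix.mul_add, Matrix.mul_one, Matrix.add_mul, hR2, this, hRR, hRR',
      Matrix.one_mul, Matrix.mul_one]
    abel
  have hBinv : B⁻¹ = R⁻¹ * (1 + C)⁻¹ * R⁻¹ := by
    rw [hBeq, Matrix.mul_inv_rev, Matrix.mul_inv_rev]
    noncomm_ring
  have hAinv : A⁻¹ = R⁻¹ * 1 * R⁻¹ := by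
    rw [← hR2, Matrix.mul_inv_rev]
    noncomm_ring
  set D := (1 + C)⁻¹ with hDdef
  have hDH : D.IsHermitian := h1C.isHermitian.inv
  have hDdet : IsUnit (1 + C).det := h1C.det_pos.ne'.isUnit
  have hD1 : D * (1 + C) = 1 := Matrix.nonsing_inv_mul _ hDdet
  have hsub : 1 - D = D * (C + C * C) * Dᴴ := by
    have h1 : (1 : Matrix (Fin M) (Fin M) ℂ) - D = D * C := by
      have : D * (1 + C) = D + D * C := by noncomm_ring
      rw [this] at hD1
      rw [← hD1]; abel
    have h2 : D * C = D * (C + C * C) * D := by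
      have : D * (C + C * C) * D = D * (C * ((1 + C) * D)) := by noncomm_ring
      rw [this, Matrix.mul_nonsing_inv _ hDdet, Matrix.mul_one]
    rw [h1, h2, hDH.eq]
  have hCC : (C + C * C).PosSemidef := by
    have : C * C = Cᴴ * C := by rw [hC.1.eq]
    rw [this]
    exact hC.add (Matrix.posSemidef_conjTranspose_mul_self C)
  have hsubPS : ((1 : Matrix (Fin M) (Fin M) ℂ) - D).PosSemidef := by
    rw [hsub]
    exact hCC.mul_mul_conjTranspose_same D
  have hfinal : A⁻¹ - B⁻¹ = R⁻¹ * (1 - D) * (R⁻¹)ᴴ := by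
    rw [hRiH.eq, hAinv, hBinv]
    noncomm_ring
  rw [hfinal]
  exact hsubPS.mul_mul_conjTranspose_same R⁻¹

lemma aux_det_one_dim {inst : DecidableEq (Fin 1)} (N : Matrix (Fin 1) (Fin 1) ℂ) :
    @Matrix.det (Fin 1) inst _ ℂ _ N = N 0 0 := by
  rw [Subsingleton.elim inst (instDecidableEqFin 1)]
  exact Matrix.det_fin_one N

/-- Matrix determinant lemma specialization. -/
lemma aux_det_rank_one {c : ℝ} (u : Fin M → ℂ) {A : Matrix (Fin M) (Fin M) ℂ}
    (hA : A.PosDef) :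
    (A + (c : ℂ) • Matrix.vecMulVec u (star u)).det
      = A.det * (1 + (c : ℂ) * (star u ⬝ᵥ A⁻¹ *ᵥ u)) := by
  have hAdet : IsUnit A.det := hA.det_pos.ne'.isUnit
  have hrw : (c : ℂ) • Matrix.vecMulVec u (star u)
      = Matrix.replicateCol (Fin 1) ((c : ℂ) • u) * Matrix.replicateRow (Fin 1) (star u) := by
    erw [← Matrix.vecMulVec_eq (Fin 1)]
    ext i j
    simp [Matrix.vecMulVec, mul_assoc]
  rw [hrw]
  erw [Matrix.det_add_replicateCol_mul_replicateRow hAdet]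
  congr 1
  erw [aux_det_one_dim]
  have hcol : A⁻¹ * Matrix.replicateCol (Fin 1) ((c : ℂ) • u)
      = Matrix.replicateCol (Fin 1) (A⁻¹ *ᵥ ((c : ℂ) • u)) := (Matrix.replicateCol_mulVec _ _).symm
  rw [Matrix.mul_assoc, hcol]
  simp only [Matrix.add_apply, Matrix.one_apply_eq, Matrix.replicateRow_mul_replicateCol_apply]
  rw [Matrix.mulVec_smul, dotProduct_smul]
  simp [smul_eq_mul]

end Aux

/-- Lemma 4.1 (single-user version): enlarging the set of interferers can only decrease the
achievable rate of user `k`, i.e. `R_k^{T_o} ≥ R_k^{T_p}` when `T_o ⊆ T_p` and `k ∉ T_p`;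
equivalently, in determinant form,
`det(I + c(h_k h_k^H + G_{T_o})) · det(I + c G_{T_p}) ≥ det(I + c G_{T_o}) · det(I + c(h_k h_k^H + G_{T_p}))`,
all four determinants being positive reals. -/
theorem stmt_0 {M K : ℕ} (hM : 0 < M) (h : Fin K → Fin M → ℂ) (c : ℝ) (hc : 0 < c)
    (k : Fin K) (To Tp : Finset (Fin K)) (hsub : To ⊆ Tp) (hk : k ∉ Tp) :
    rate h c {k} To ≥ rate h c {k} Tp ∧
    (0 < ((1 + (c : ℂ) • (gram h {k} + gram h To)).det).re ∧
      0 < ((1 + (c : ℂ) • gram h Tp).det).re ∧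
      0 < ((1 + (c : ℂ) • gram h To).det).re ∧
      0 < ((1 + (c : ℂ) • (gram h {k} + gram h Tp)).det).re) ∧
    ((1 + (c : ℂ) • (gram h {k} + gram h To)).det).re *
        ((1 + (c : ℂ) • gram h Tp).det).re ≥
      ((1 + (c : ℂ) • gram h To).det).re *
        ((1 + (c : ℂ) • (gram h {k} + gram h Tp)).det).re := by
  classical
  set u := h k with hu
  have hg : gram h ({k} : Finset (Fin K)) = Matrix.vecMulVec u (star u) := by
    unfold _root_.gram; rw [Finset.sum_singleton]
  set A := 1 + (c : ℂ) • gram h To with hAdef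
  set B := 1 + (c : ℂ) • gram h Tp with hBdef
  have hA : A.PosDef := aux_one_add_posDef hc.le (aux_gram_posSemidef h To)
  have hB : B.PosDef := aux_one_add_posDef hc.le (aux_gram_posSemidef h Tp)
  have hBA : (B - A).PosSemidef := by
    have hsum : gram h To + gram h (Tp \ To) = gram h Tp := by
      unfold _root_.gram
      rw [← Finset.sum_union Finset.disjoint_sdiff]
      congr 1
      exact Finset.union_sdiff_of_subset hsub
    have hBAeq : B - A = (c : ℂ) • gram h (Tp \ To) := by
      rw [hAdef, hBdef, ← hsum, smul_add]; abel
    rw [hBAeq]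
    exact aux_smul_posSemidef hc.le (aux_gram_posSemidef h _)
  have hinv := aux_inv_sub_inv_posSemidef hA hB hBA
  set α := star u ⬝ᵥ A⁻¹ *ᵥ u with hαdef
  set β := star u ⬝ᵥ B⁻¹ *ᵥ u with hβdef
  have hα0 : 0 ≤ α := hA.inv.posSemidef.dotProduct_mulVec_nonneg u
  have hβ0 : 0 ≤ β := hB.inv.posSemidef.dotProduct_mulVec_nonneg u
  have hαβ : 0 ≤ α - β := by
    have h2 := hinv.dotProduct_mulVec_nonneg u
    rwa [Matrix.sub_mulVec, dotProduct_sub] at h2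
  have hdetTo : (1 + (c : ℂ) • (gram h {k} + gram h To)).det
      = A.det * (1 + (c : ℂ) * α) := by
    have heq : 1 + (c : ℂ) • (gram h {k} + gram h To)
        = A + (c : ℂ) • Matrix.vecMulVec u (star u) := by
      rw [hg, hAdef, smul_add]; abel
    rw [heq, aux_det_rank_one u hA, hαdef]
  have hdetTp : (1 + (c : ℂ) • (gram h {k} + gram h Tp)).det
      = B.det * (1 + (c : ℂ) * β) := by
    have heq : 1 + (c : ℂ) • (gram h {k} + gram h Tp)
        = B + (c : ℂ) • Matrix.vecMulVec u (star u) := by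
      rw [hg, hBdef, smul_add]; abel
    rw [heq, aux_det_rank_one u hB, hβdef]
  -- translate complex facts to real/imaginary parts
  obtain ⟨hAre, hAim⟩ := Complex.lt_def.mp hA.det_pos
  obtain ⟨hBre, hBim⟩ := Complex.lt_def.mp hB.det_pos
  simp only [Complex.zero_re, Complex.zero_im] at hAre hAim hBre hBim
  obtain ⟨hαre, hαim⟩ := Complex.le_def.mp hα0
  obtain ⟨hβre, hβim⟩ := Complex.le_def.mp hβ0
  obtain ⟨hαβre, _⟩ := Complex.le_def.mp hαβ
  simp only [Complex.zero_re, Complex.zero_im, Complex.sub_re] at hαre hαim hβre hβim hαβre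
  set a := A.det.re with hadef
  set b := B.det.re with hbdef
  have hxim : (1 + (c : ℂ) * α).im = 0 := by
    simp [Complex.add_im, Complex.mul_im, ← hαim]
  have hyim : (1 + (c : ℂ) * β).im = 0 := by
    simp [Complex.add_im, Complex.mul_im, ← hβim]
  have hxre : (1 + (c : ℂ) * α).re = 1 + c * α.re := by
    simp [Complex.add_re, Complex.mul_re, ← hαim]
  have hyre : (1 + (c : ℂ) * β).re = 1 + c * β.re := by
    simp [Complex.add_re, Complex.mul_re, ← hβim]
  have hreTo : ((1 + (c : ℂ) • (gram h {k} + gram h To)).det).re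
      = a * (1 + c * α.re) := by
    rw [hdetTo, Complex.mul_re, ← hAim, hxre, hxim]
    ring
  have hreTp : ((1 + (c : ℂ) • (gram h {k} + gram h Tp)).det).re
      = b * (1 + c * β.re) := by
    rw [hdetTp, Complex.mul_re, ← hBim, hyre, hyim]
    ring
  have hy1 : (0:ℝ) < 1 + c * β.re := by nlinarith
  have hx1 : (0:ℝ) < 1 + c * α.re := by nlinarith
  have hxy : 1 + c * β.re ≤ 1 + c * α.re := by nlinarith
  refine ⟨?_, ⟨?_, ?_, ?_, ?_⟩, ?_⟩
  · unfold rate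
    rw [hreTo, hreTp, ← hAdef, ← hBdef, ← hadef, ← hbdef,
      mul_div_cancel_left₀ _ hAre.ne', mul_div_cancel_left₀ _ hBre.ne']
    exact Real.logb_le_logb_of_le (by norm_num) hy1 hxy
  · rw [hreTo]; exact mul_pos hAre hx1
  · exact hBre
  · exact hAre
  · rw [hreTp]; exact mul_pos hBre hy1
  · rw [hreTo, hreTp]
    nlinarith [mul_le_mul_of_nonneg_left hxy (mul_pos hAre hBre).le]
end

section
/- Let M be a positive integer and let A, B₁, B₂ be Hermitian positive semidefinite complex M×M matrices such that B₂ − B₁ is positive semidefinite. Then det(I_M + A + B₁) · det(I_M + B₂) ≥ det(I_M + B₁) · det(I_M + A + B₂), where all four determinants are positive real numbers. Equivalently, the ratio B ↦ det(I_M + A + B)/det(I_M + B) is nonincreasing in B with respect to the Loewner (positive semidefinite) order. -/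
open Matrix ComplexOrder


variable {n : Type*} [Fintype n] [DecidableEq n]

section
open scoped MatrixOrder

/-- Square root of a PSD matrix (via the continuous functional calculus). -/
noncomputable def Matrix.PosSemidef.sqrt {A : Matrix n n ℂ} (_hA : A.PosSemidef) :
    Matrix n n ℂ := CFC.sqrt A

lemma Matrix.PosSemidef.posSemidef_sqrt {A : Matrix n n ℂ} (hA : A.PosSemidef) :
    hA.sqrt.PosSemidef := (CFC.sqrt_nonneg A).posSemidef

lemma Matrix.PosSemidef.sqrt_mul_self {A : Matrix n n ℂ} (hA : A.PosSemidef) :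
    hA.sqrt * hA.sqrt = A := CFC.sqrt_mul_sqrt_self A hA.nonneg

end

/-- `det (1 + Z)` of a PSD complex matrix is a real number `≥ 1`. -/
lemma det_one_add_psd (Z : Matrix n n ℂ) (hZ : Z.PosSemidef) :
    ∃ r : ℝ, 1 ≤ r ∧ (1 + Z).det = (r : ℂ) := by
  have hH := hZ.isHermitian
  set U : Matrix n n ℂ := (hH.eigenvectorUnitary : Matrix n n ℂ) with hUdef
  have hU : U * star U = 1 := (Matrix.mem_unitaryGroup_iff).mp hH.eigenvectorUnitary.2
  set D : Matrix n n ℂ := diagonal (RCLike.ofReal ∘ hH.eigenvalues) with hDdef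
  have hspec : Z = U * D * star U := hH.spectral_theorem
  have h1Z : 1 + Z = U * (1 + D) * star U := by
    rw [hspec, Matrix.mul_add, Matrix.add_mul, Matrix.mul_one, hU]
  refine ⟨∏ i, (1 + hH.eigenvalues i), ?_, ?_⟩
  · calc (1:ℝ) = ∏ _i : n, 1 := by simp
    _ ≤ ∏ i, (1 + hH.eigenvalues i) :=
        Finset.prod_le_prod (fun i _ => zero_le_one)
          (fun i _ => by linarith [hZ.eigenvalues_nonneg i])
  · rw [h1Z, Matrix.det_mul_right_comm, hU, Matrix.one_mul]
    have : (1 : Matrix n n ℂ) + D = diagonal (fun i => 1 + (hH.eigenvalues i : ℂ)) := by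
      rw [hDdef, ← diagonal_one, Matrix.diagonal_add]
      rfl
    rw [this, det_diagonal]
    push_cast
    rfl

/-- Conjugating an invertible PSD matrix by the square root of its inverse gives `1`. -/
lemma conj_sqrt_inv (R : Matrix n n ℂ) (hR : R.PosSemidef) (hu : IsUnit R.det) :
    hR.inv.sqrt * R * hR.inv.sqrt = 1 := by
  set T := hR.inv.sqrt with hT
  have hTT : T * T = R⁻¹ := hR.inv.sqrt_mul_self
  have h1 : R * R⁻¹ = 1 := mul_nonsing_inv _ hu
  have h2 : R⁻¹ * R = 1 := nonsing_inv_mul _ hu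
  have hcomm : T * R⁻¹ = R⁻¹ * T := by
    calc T * R⁻¹ = T * (T * T) := by rw [hTT]
    _ = T * T * T := by rw [Matrix.mul_assoc]
    _ = R⁻¹ * T := by rw [hTT]
  have hRT : R * T = T * R := by
    have h3 := congrArg (fun X => R * X * R) hcomm
    simp only [Matrix.mul_assoc] at h3
    calc R * T = R * T * 1 := by rw [Matrix.mul_one]
    _ = R * (T * (R⁻¹ * R)) := by simp only [h2, Matrix.mul_one, Matrix.mul_assoc]
    _ = R * (R⁻¹ * (T * R)) := h3
    _ = R * R⁻¹ * (T * R) := by rw [Matrix.mul_assoc]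
    _ = T * R := by rw [h1, Matrix.one_mul]
  calc T * R * T = R * T * T := by rw [hRT]
  _ = R * (T * T) := by rw [Matrix.mul_assoc]
  _ = 1 := by rw [hTT, h1]

/-- If `R` is PSD, invertible and `R - 1` is PSD, then `1 - R⁻¹` is PSD. -/
lemma one_sub_inv_psd (R : Matrix n n ℂ) (hR : R.PosSemidef) (hu : IsUnit R.det)
    (hR1 : (R - 1).PosSemidef) : ((1 : Matrix n n ℂ) - R⁻¹).PosSemidef := by
  set T := hR.inv.sqrt with hT
  have hTh : Tᴴ = T := hR.inv.posSemidef_sqrt.isHermitian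
  have key : (1 : Matrix n n ℂ) - R⁻¹ = Tᴴ * (R - 1) * T := by
    rw [hTh]
    symm
    calc T * (R - 1) * T = T * R * T - T * 1 * T := by
          rw [Matrix.mul_sub, Matrix.sub_mul]
    _ = 1 - R⁻¹ := by rw [conj_sqrt_inv R hR hu, Matrix.mul_one, hR.inv.sqrt_mul_self]
  rw [key]
  exact hR1.conjTranspose_mul_mul_same T

/-- Inverse is antitone on positive definite matrices. -/
lemma inv_antitone (P Q : Matrix n n ℂ) (hP : P.PosDef) (hQ : Q.PosDef)
    (hPQ : (Q - P).PosSemidef) : (P⁻¹ - Q⁻¹).PosSemidef := by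
  set S := hP.posSemidef.inv.sqrt with hS
  have hSh : Sᴴ = S := hP.posSemidef.inv.posSemidef_sqrt.isHermitian
  have hSS : S * S = P⁻¹ := hP.posSemidef.inv.sqrt_mul_self
  have hSPS : S * P * S = 1 := conj_sqrt_inv P hP.posSemidef hP.det_pos.ne'.isUnit
  have hSdet : IsUnit S.det := by
    have h1 : S.det * S.det = P⁻¹.det := by rw [← det_mul, hSS]
    have h2 : IsUnit (S.det * S.det) := h1 ▸ hP.inv.det_pos.ne'.isUnit
    exact isUnit_of_mul_isUnit_left h2
  set R := S * Q * S with hR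
  have hRpsd : R.PosSemidef := by
    have := hQ.posSemidef.conjTranspose_mul_mul_same S
    rwa [hSh] at this
  have hRdet : IsUnit R.det := by
    rw [hR, det_mul, det_mul]
    exact (hSdet.mul hQ.det_pos.ne'.isUnit).mul hSdet
  have hR1 : (R - 1).PosSemidef := by
    have key : R - 1 = Sᴴ * (Q - P) * S := by
      rw [hSh, hR, ← hSPS, Matrix.mul_sub, Matrix.sub_mul]
    rw [key]
    exact hPQ.conjTranspose_mul_mul_same S
  have h2 : ((1 : Matrix n n ℂ) - R⁻¹).PosSemidef := one_sub_inv_psd R hRpsd hRdet hR1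
  have hSinv1 : S * S⁻¹ = 1 := mul_nonsing_inv _ hSdet
  have hSinv2 : S⁻¹ * S = 1 := nonsing_inv_mul _ hSdet
  have key : P⁻¹ - Q⁻¹ = Sᴴ * ((1 : Matrix n n ℂ) - R⁻¹) * S := by
    rw [hSh]
    symm
    have hRinv : R⁻¹ = S⁻¹ * Q⁻¹ * S⁻¹ := by
      rw [hR, Matrix.mul_inv_rev, Matrix.mul_inv_rev, Matrix.mul_assoc]
    calc S * (1 - R⁻¹) * S = S * 1 * S - S * R⁻¹ * S := by
          rw [Matrix.mul_sub, Matrix.sub_mul]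
    _ = P⁻¹ - Q⁻¹ := by
          rw [Matrix.mul_one, hSS, hRinv]
          congr 1
          calc S * (S⁻¹ * Q⁻¹ * S⁻¹) * S
              = (S * S⁻¹) * Q⁻¹ * (S⁻¹ * S) := by
                simp only [Matrix.mul_assoc]
          _ = Q⁻¹ := by rw [hSinv1, hSinv2, Matrix.one_mul, Matrix.mul_one]
  rw [key]
  exact h2.conjTranspose_mul_mul_same S

/-- Factorization `det (P + A) = det P * det (1 + √A * P⁻¹ * √A)`. -/
lemma det_factor (P A : Matrix n n ℂ) (hP : P.PosDef) (hA : A.PosSemidef) :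
    (P + A).det = P.det * ((1 : Matrix n n ℂ) + hA.sqrt * P⁻¹ * hA.sqrt).det := by
  have hPinv : P * P⁻¹ = 1 := mul_nonsing_inv _ hP.det_pos.ne'.isUnit
  have key : P + A = P * (1 + P⁻¹ * A) := by
    rw [Matrix.mul_add, Matrix.mul_one, ← Matrix.mul_assoc, hPinv, Matrix.one_mul]
  rw [key, det_mul]
  congr 1
  conv_lhs => rw [← hA.sqrt_mul_self, ← Matrix.mul_assoc]
  rw [det_one_add_mul_comm, Matrix.mul_assoc]

/-- Monotonicity of `det (1 + ·)` on PSD matrices, with values real `≥ 1`. -/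
lemma det_mono (X Y : Matrix n n ℂ) (hX : X.PosSemidef) (hY : Y.PosSemidef)
    (hXY : (X - Y).PosSemidef) :
    ∃ rX rY : ℝ, 1 ≤ rY ∧ rY ≤ rX ∧ (1 + X).det = (rX : ℂ) ∧ (1 + Y).det = (rY : ℂ) := by
  obtain ⟨rX, hrX1, hrX⟩ := det_one_add_psd X hX
  obtain ⟨rY, hrY1, hrY⟩ := det_one_add_psd Y hY
  refine ⟨rX, rY, hrY1, ?_, hrX, hrY⟩
  have hQ : ((1 : Matrix n n ℂ) + Y).PosDef := Matrix.PosDef.one.add_posSemidef hY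
  have hsplit : (1 : Matrix n n ℂ) + X = (1 + Y) + (X - Y) := by abel
  have hfac := det_factor (1 + Y) (X - Y) hQ hXY
  set Z := hXY.sqrt * ((1 : Matrix n n ℂ) + Y)⁻¹ * hXY.sqrt with hZ
  have hZpsd : Z.PosSemidef := by
    have := hQ.inv.posSemidef.conjTranspose_mul_mul_same hXY.sqrt
    rwa [hXY.posSemidef_sqrt.isHermitian] at this
  obtain ⟨c, hc1, hc⟩ := det_one_add_psd Z hZpsd
  have : (rX : ℂ) = ((rY * c : ℝ) : ℂ) := by
    rw [← hrX, hsplit, hfac, hrY, hc]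
    push_cast
    ring
  have hrXeq : rX = rY * c := by exact_mod_cast this
  nlinarith


/-- Determinant-level content of Lemma 4.1: for Hermitian positive semidefinite complex
matrices `A, B₁, B₂` with `B₂ - B₁` positive semidefinite,
`det(I + A + B₁) · det(I + B₂) ≥ det(I + B₁) · det(I + A + B₂)`, all four determinants
being positive reals; i.e. `B ↦ det(I + A + B)/det(I + B)` is nonincreasing in the
Loewner order. -/
theorem stmt_2 {M : ℕ} (hM : 0 < M) (A B₁ B₂ : Matrix (Fin M) (Fin M) ℂ)
    (hA : A.PosSemidef) (hB₁ : B₁.PosSemidef) (hB₂ : B₂.PosSemidef)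
    (hBB : (B₂ - B₁).PosSemidef) :
    (0 < ((1 + A + B₁).det).re ∧ 0 < ((1 + B₂).det).re ∧
      0 < ((1 + B₁).det).re ∧ 0 < ((1 + A + B₂).det).re) ∧
    ((1 + A + B₁).det).re * ((1 + B₂).det).re ≥
      ((1 + B₁).det).re * ((1 + A + B₂).det).re := by
  set P : Matrix (Fin M) (Fin M) ℂ := 1 + B₁ with hPdef
  set Q : Matrix (Fin M) (Fin M) ℂ := 1 + B₂ with hQdef
  have hP : P.PosDef := Matrix.PosDef.one.add_posSemidef hB₁
  have hQ : Q.PosDef := Matrix.PosDef.one.add_posSemidef hB₂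
  have hQP : (Q - P).PosSemidef := by
    have : Q - P = B₂ - B₁ := by rw [hPdef, hQdef]; abel
    rwa [this]
  obtain ⟨p, hp1, hpdet⟩ := det_one_add_psd B₁ hB₁
  obtain ⟨q, hq1, hqdet⟩ := det_one_add_psd B₂ hB₂
  -- the conjugated matrices
  set s := hA.sqrt with hs
  have hsh : sᴴ = s := hA.posSemidef_sqrt.isHermitian
  set X := s * P⁻¹ * s with hX
  set Y := s * Q⁻¹ * s with hY
  have hXpsd : X.PosSemidef := by
    have := hP.inv.posSemidef.conjTranspose_mul_mul_same s
    rwa [hsh] at this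
  have hYpsd : Y.PosSemidef := by
    have := hQ.inv.posSemidef.conjTranspose_mul_mul_same s
    rwa [hsh] at this
  have hXY : (X - Y).PosSemidef := by
    have hinv := inv_antitone P Q hP hQ hQP
    have key : X - Y = sᴴ * (P⁻¹ - Q⁻¹) * s := by
      rw [hsh, hX, hY, Matrix.mul_sub, Matrix.sub_mul]
    rw [key]
    exact hinv.conjTranspose_mul_mul_same s
  obtain ⟨rX, rY, hrY1, hrYX, hrXdet, hrYdet⟩ := det_mono X Y hXpsd hYpsd hXY
  have hfacP : (P + A).det = ((p * rX : ℝ) : ℂ) := by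
    rw [det_factor P A hP hA, hPdef, hpdet, ← hX, hrXdet]
    push_cast; ring
  have hfacQ : (Q + A).det = ((q * rY : ℝ) : ℂ) := by
    rw [det_factor Q A hQ hA, hQdef, hqdet, ← hY, hrYdet]
    push_cast; ring
  have e1 : (1 : Matrix (Fin M) (Fin M) ℂ) + A + B₁ = P + A := by rw [hPdef]; abel
  have e2 : (1 : Matrix (Fin M) (Fin M) ℂ) + A + B₂ = Q + A := by rw [hQdef]; abel
  have hp' : P.det = (p:ℂ) := hpdet
  have hq' : Q.det = (q:ℂ) := hqdet
  rw [e1, e2, hfacP, hfacQ, hp', hq']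
  simp only [Complex.ofReal_re]
  have hrX1 : (1:ℝ) ≤ rX := le_trans hrY1 hrYX
  have hkey : p * q * rY ≤ p * q * rX :=
    mul_le_mul_of_nonneg_left hrYX (by nlinarith : (0:ℝ) ≤ p * q)
  refine ⟨⟨by nlinarith, by linarith, by linarith, by nlinarith⟩, by nlinarith⟩
end

section
/- Fix positive integers M and K, complex column vectors h_1,…,h_K ∈ ℂ^M, a real constant c > 0, and a single guaranteed rate r_G > 0 with r_k = r_G for all k (equal-rate system). Let π be any decoding order (permutation of {1,…,K}) that is greedy in the max-SINR sense: for each step u ∈ {1,…,K}, writing L_u = {π(u), π(u+1), …, π(K)} for the not-yet-decoded users, R_{π(u)}^{L_u∖{π(u)}} = max_{j ∈ L_u} R_j^{L_u∖{j}}. Then for every permutation σ of {1,…,K}, |S*_SIC(π)| ≥ |S*_SIC(σ)|; i.e., decoding at each step the remaining user with highest achievable rate maximizes the number of successfully decoded users among all SIC decoding orders. -/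
open Matrix BigOperators

open scoped ComplexOrder


lemma gram_posSemidef {M K : ℕ} (h : Fin K → Fin M → ℂ) (T : Finset (Fin K)) :
    (gram h T).PosSemidef := by
  unfold _root_.gram
  refine Finset.sum_induction _ _ (fun a b ha hb => ha.add hb) Matrix.PosSemidef.zero ?_
  intro k _
  rw [Matrix.vecMulVec_eq Unit, ← Matrix.conjTranspose_replicateCol]
  exact Matrix.posSemidef_self_mul_conjTranspose _

lemma smulGram_posSemidef {M K : ℕ} (h : Fin K → Fin M → ℂ) {c : ℝ} (hc : 0 ≤ c)
    (T : Finset (Fin K)) : ((c : ℂ) • gram h T).PosSemidef := by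
  obtain ⟨hH, hQ⟩ := Matrix.posSemidef_iff_dotProduct_mulVec.1 (gram_posSemidef h T)
  refine Matrix.posSemidef_iff_dotProduct_mulVec.2 ⟨?_, fun x => ?_⟩
  · show _ᴴ = _
    rw [Matrix.conjTranspose_smul, hH]
    congr 1
    simp [RCLike.star_def]
  · rw [Matrix.smul_mulVec, dotProduct_smul, smul_eq_mul]
    refine mul_nonneg ?_ (hQ x)
    rw [Complex.le_def]
    simp [hc]

lemma onePlus_posDef {M K : ℕ} (h : Fin K → Fin M → ℂ) {c : ℝ} (hc : 0 ≤ c)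
    (T : Finset (Fin K)) : (1 + (c : ℂ) • gram h T).PosDef :=
  Matrix.PosDef.add_posSemidef Matrix.PosDef.one (smulGram_posSemidef h hc T)

lemma det_re_pos {M : ℕ} {A : Matrix (Fin M) (Fin M) ℂ} (hA : A.PosDef) :
    0 < A.det.re := by
  have := hA.det_pos; rw [Complex.lt_def] at this; exact by simpa using this.1

lemma det_im_zero {M : ℕ} {A : Matrix (Fin M) (Fin M) ℂ} (hA : A.PosDef) :
    A.det.im = 0 := by
  have := hA.det_pos; rw [Complex.lt_def] at this; exact by simpa using this.2.symm

lemma rate_singleton_eq {M K : ℕ} (h : Fin K → Fin M → ℂ) {c : ℝ} (hc : 0 < c)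
    (j : Fin K) (T : Finset (Fin K)) :
    rate h c {j} T =
      Real.logb 2
        (1 + c * (star (h j) ⬝ᵥ ((1 + (c : ℂ) • gram h T)⁻¹ *ᵥ h j)).re) := by
  set A := 1 + (c : ℂ) • gram h T with hAdef
  set q := star (h j) ⬝ᵥ (A⁻¹ *ᵥ h j) with hqdef
  have hApd : A.PosDef := onePlus_posDef h hc.le T
  have hdre : 0 < A.det.re := det_re_pos hApd
  have hdim : A.det.im = 0 := det_im_zero hApd
  have hq : (0 : ℂ) ≤ q := hApd.inv.posSemidef.dotProduct_mulVec_nonneg (h j)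
  rw [Complex.le_def] at hq
  obtain ⟨hqre, hqim⟩ := hq
  have h1 : 1 + (c : ℂ) • (gram h {j} + gram h T) =
      A + Matrix.replicateCol Unit ((c : ℂ) • h j) * Matrix.replicateRow Unit (star (h j)) := by
    have hg : gram h {j} = Matrix.vecMulVec (h j) (star (h j)) := by
      unfold _root_.gram; rw [Finset.sum_singleton]
    have h2 : (c : ℂ) • Matrix.vecMulVec (h j) (star (h j)) =
        Matrix.vecMulVec ((c : ℂ) • h j) (star (h j)) := by
      ext i k; simp [Matrix.vecMulVec_apply, mul_assoc]
    rw [smul_add, hg, h2, Matrix.vecMulVec_eq Unit, hAdef]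
    abel
  have hnum : (1 + (c : ℂ) • (gram h {j} + gram h T)).det = A.det * (1 + (c : ℂ) * q) := by
    rw [h1, Matrix.det_add_replicateCol_mul_replicateRow hApd.det_pos.ne'.isUnit]
    congr 1
    rw [Matrix.det_unique]
    have : Matrix.replicateRow Unit (star (h j)) * A⁻¹ = Matrix.replicateRow Unit (star (h j) ᵥ* A⁻¹) := by
      rw [Matrix.replicateRow_vecMul]
    rw [this, Matrix.add_apply, Matrix.one_apply_eq, Matrix.replicateRow_mul_replicateCol_apply,
      dotProduct_smul, hqdef, Matrix.dotProduct_mulVec, smul_eq_mul]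
  have h3 : ((1 + (c : ℂ) • (gram h {j} + gram h T)).det).re = A.det.re * (1 + c * q.re) := by
    rw [hnum, Complex.mul_re, hdim]
    have : ((1 : ℂ) + (c : ℂ) * q).re = 1 + c * q.re := by
      simp [Complex.add_re, Complex.mul_re, ← hqim]
    rw [this]; ring
  unfold rate
  rw [h3, ← hAdef, mul_comm, mul_div_assoc, div_self hdre.ne', mul_one]

private lemma conj_quad {M : ℕ} {B : Matrix (Fin M) (Fin M) ℂ} (N : Matrix (Fin M) (Fin M) ℂ)
    (hB : B.IsHermitian) (y : Fin M → ℂ) :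
    star y ⬝ᵥ ((B * N * B) *ᵥ y) = star (B *ᵥ y) ⬝ᵥ (N *ᵥ (B *ᵥ y)) := by
  rw [Matrix.star_mulVec, hB.eq, ← Matrix.mulVec_mulVec, ← Matrix.mulVec_mulVec,
    Matrix.dotProduct_mulVec (star y) B]

lemma quad_anti {M K : ℕ} (h : Fin K → Fin M → ℂ) {c : ℝ} (hc : 0 < c)
    {T T' : Finset (Fin K)} (hTT' : T ⊆ T') (x : Fin M → ℂ) :
    (star x ⬝ᵥ ((1 + (c : ℂ) • gram h T')⁻¹ *ᵥ x)).re ≤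
      (star x ⬝ᵥ ((1 + (c : ℂ) • gram h T)⁻¹ *ᵥ x)).re := by
  set A := 1 + (c : ℂ) • gram h T with hAdef
  set A' := 1 + (c : ℂ) • gram h T' with hA'def
  set P := (c : ℂ) • gram h (T' \ T) with hPdef
  have hP : P.PosSemidef := smulGram_posSemidef h hc.le _
  have hA : A.PosDef := onePlus_posDef h hc.le T
  have hA' : A'.PosDef := onePlus_posDef h hc.le T'
  have hsplit : A' = A + P := by
    have hg : gram h T' = gram h T + gram h (T' \ T) := by
      unfold _root_.gram
      rw [← Finset.sum_sdiff hTT', add_comm]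
    rw [hA'def, hg, smul_add, hAdef, hPdef]; abel
  have hAu : IsUnit A.det := hA.det_pos.ne'.isUnit
  have hA'u : IsUnit A'.det := hA'.det_pos.ne'.isUnit
  have hPeq : P = A' - A := by rw [hsplit]; abel
  have key1 : A'⁻¹ * P * A⁻¹ = A⁻¹ - A'⁻¹ := by
    rw [hPeq, Matrix.mul_sub, Matrix.sub_mul, Matrix.nonsing_inv_mul _ hA'u,
      Matrix.mul_assoc, Matrix.mul_nonsing_inv _ hAu, Matrix.one_mul, Matrix.mul_one]
  have key2 : A⁻¹ * P * A'⁻¹ = A⁻¹ - A'⁻¹ := by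
    rw [hPeq, Matrix.mul_sub, Matrix.sub_mul, Matrix.nonsing_inv_mul _ hAu,
      Matrix.mul_assoc, Matrix.mul_nonsing_inv _ hA'u, Matrix.one_mul, Matrix.mul_one]
  have hdecomp : A⁻¹ - A'⁻¹ = A'⁻¹ * P * A'⁻¹ + A'⁻¹ * (P * A⁻¹ * P) * A'⁻¹ := by
    calc A⁻¹ - A'⁻¹ = A'⁻¹ * P * A⁻¹ := key1.symm
      _ = A'⁻¹ * P * (A'⁻¹ + (A⁻¹ - A'⁻¹)) := by rw [add_sub_cancel]
      _ = A'⁻¹ * P * A'⁻¹ + A'⁻¹ * P * (A⁻¹ - A'⁻¹) := by rw [Matrix.mul_add]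
      _ = A'⁻¹ * P * A'⁻¹ + A'⁻¹ * (P * A⁻¹ * P) * A'⁻¹ := by
          rw [← key2]; simp only [Matrix.mul_assoc]
  set w := A'⁻¹ *ᵥ x with hwdef
  have hfinal : star x ⬝ᵥ (A⁻¹ *ᵥ x) - star x ⬝ᵥ (A'⁻¹ *ᵥ x) =
      star w ⬝ᵥ (P *ᵥ w) + star (P *ᵥ w) ⬝ᵥ (A⁻¹ *ᵥ (P *ᵥ w)) := by
    have e1 : star x ⬝ᵥ (A⁻¹ *ᵥ x) - star x ⬝ᵥ (A'⁻¹ *ᵥ x) =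
        star x ⬝ᵥ ((A⁻¹ - A'⁻¹) *ᵥ x) := by
      rw [Matrix.sub_mulVec, dotProduct_sub]
    rw [e1, hdecomp, Matrix.add_mulVec, dotProduct_add,
      conj_quad P hA'.inv.isHermitian x, conj_quad (P * A⁻¹ * P) hA'.inv.isHermitian x,
      ← hwdef, conj_quad A⁻¹ hP.isHermitian w]
  have hnn : (0 : ℂ) ≤ star x ⬝ᵥ (A⁻¹ *ᵥ x) - star x ⬝ᵥ (A'⁻¹ *ᵥ x) := by
    rw [hfinal]
    exact add_nonneg (hP.dotProduct_mulVec_nonneg w) (hA.inv.posSemidef.dotProduct_mulVec_nonneg (P *ᵥ w))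
  rw [Complex.le_def] at hnn
  have := hnn.1
  rw [Complex.sub_re] at this
  simpa using sub_nonneg.mp (by simpa using this)

lemma rate_anti {M K : ℕ} (h : Fin K → Fin M → ℂ) {c : ℝ} (hc : 0 < c)
    (j : Fin K) {T T' : Finset (Fin K)} (hTT' : T ⊆ T') :
    rate h c {j} T' ≤ rate h c {j} T := by
  rw [rate_singleton_eq h hc, rate_singleton_eq h hc]
  have hq' : (0 : ℂ) ≤ star (h j) ⬝ᵥ ((1 + (c : ℂ) • gram h T')⁻¹ *ᵥ h j) :=
    (onePlus_posDef h hc.le T').inv.posSemidef.dotProduct_mulVec_nonneg (h j)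
  have hq'' : 0 ≤ (star (h j) ⬝ᵥ ((1 + (c : ℂ) • gram h T')⁻¹ *ᵥ h j)).re :=
    (Complex.le_def.1 hq').1
  refine Real.logb_le_logb_of_le one_lt_two (by nlinarith) ?_
  have := quad_anti h hc hTT' (h j)
  nlinarith

open scoped Classical

/-- The number of users successfully decoded by successive interference cancellation with
decoding order `e` at target rates `r`: with `T_u = {e v : v > u}`, it is `u* - 1` where
`u*` is the first position at which `r (e u) > R_{e u}^{T_u}` (and `K` if no position
fails), i.e. the cardinality of the SIC-decodable set `S*_SIC = {e 1, …, e (u*-1)}`. -/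
noncomputable def sicCount {M K : ℕ} (h : Fin K → Fin M → ℂ) (c : ℝ)
    (r : Fin K → ℝ) (e : Equiv.Perm (Fin K)) : ℕ :=
  (Finset.univ.filter (fun u : Fin K =>
    ∀ v ≤ u, r (e v) ≤ rate h c {e v} ((Finset.Ioi v).image e))).card

lemma image_Ici_sdiff {K : ℕ} (e : Equiv.Perm (Fin K)) (u : Fin K) :
    ((Finset.Ici u).image e) \ {e u} = (Finset.Ioi u).image e := by
  ext x
  simp only [Finset.mem_sdiff, Finset.mem_image, Finset.mem_Ici, Finset.mem_Ioi,
    Finset.mem_singleton]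
  constructor
  · rintro ⟨⟨w, hw, rfl⟩, hne⟩
    exact ⟨w, lt_of_le_of_ne hw (fun hwu => hne (by rw [hwu])), rfl⟩
  · rintro ⟨w, hw, rfl⟩
    exact ⟨⟨w, hw.le, rfl⟩, fun hee => (ne_of_gt hw) (e.injective hee)⟩

/-- Lemma 5.2 of the paper (optimality of the V-BLAST ordering in an equal-rate system):
if all users transmit at the same rate `r_G > 0` and the decoding order `e` is greedy in the
max-SINR sense — at each step `u`, among the not-yet-decoded users
`L_u = {e u, e (u+1), …, e K}` the user `e u` has the highest achievable rate under the
interference of the remaining ones — then `e` maximizes the number of SIC-decodable users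
over all decoding orders `σ`. -/
theorem stmt_7 {M K : ℕ} (hM : 0 < M) (hK : 0 < K) (h : Fin K → Fin M → ℂ)
    (c : ℝ) (hc : 0 < c) (r_G : ℝ) (hrG : 0 < r_G)
    (e : Equiv.Perm (Fin K))
    (hgreedy : ∀ u : Fin K, ∀ j ∈ (Finset.Ici u).image e,
      rate h c {j} (((Finset.Ici u).image e) \ {j}) ≤
        rate h c {e u} (((Finset.Ici u).image e) \ {e u}))
    (σ : Equiv.Perm (Fin K)) :
    sicCount h c (fun _ => r_G) σ ≤ sicCount h c (fun _ => r_G) e := by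
  unfold sicCount
  set Fσ := Finset.univ.filter (fun u : Fin K =>
    ∀ v ≤ u, (fun _ => r_G) (σ v) ≤ rate h c {σ v} ((Finset.Ioi v).image σ)) with hFσ
  set Fe := Finset.univ.filter (fun u : Fin K =>
    ∀ v ≤ u, (fun _ => r_G) (e v) ≤ rate h c {e v} ((Finset.Ioi v).image e)) with hFe
  rcases Finset.eq_empty_or_nonempty Fσ with hE | hne
  · simp [hE]
  · set u₀ := Fσ.max' hne with hu₀def
    have hu₀mem : u₀ ∈ Fσ := Fσ.max'_mem hne
    have hu₀ : ∀ v ≤ u₀, r_G ≤ rate h c {σ v} ((Finset.Ioi v).image σ) :=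
      (Finset.mem_filter.1 hu₀mem).2
    -- main claim: greedy succeeds at every step up to u₀
    have main : ∀ u ≤ u₀, r_G ≤ rate h c {e u} ((Finset.Ioi u).image e) := by
      intro u hu
      set L := (Finset.Ici u).image e with hLdef
      set V := L.image σ.symm with hVdef
      have hVcard : V.card = K - u.val := by
        rw [hVdef, Finset.card_image_of_injective _ σ.symm.injective,
          hLdef, Finset.card_image_of_injective _ e.injective, Fin.card_Ici]
      have hVne : V.Nonempty := by
        refine ⟨σ.symm (e u), ?_⟩
        rw [hVdef]
        exact Finset.mem_image_of_mem _ (Finset.mem_image_of_mem _ (Finset.mem_Ici.2 le_rfl))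
      set v := V.min' hVne with hvdef
      have hvV : v ∈ V := V.min'_mem hVne
      have hvu : v ≤ u := by
        by_contra hlt
        push_neg at hlt
        have hsub : V ⊆ Finset.Ioi u := by
          intro w hw
          exact Finset.mem_Ioi.2 (lt_of_lt_of_le hlt (V.min'_le w hw))
        have := Finset.card_le_card hsub
        rw [hVcard, Fin.card_Ioi] at this
        have huK : u.val < K := u.isLt
        omega
      have hjL : σ v ∈ L := by
        obtain ⟨x, hxL, hxv⟩ := Finset.mem_image.1 hvV
        rw [← hxv, Equiv.apply_symm_apply]
        exact hxL
      have hsub : L \ {σ v} ⊆ (Finset.Ioi v).image σ := by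
        intro x hx
        obtain ⟨hxL, hxj⟩ := Finset.mem_sdiff.1 hx
        rw [Finset.mem_singleton] at hxj
        refine Finset.mem_image.2 ⟨σ.symm x, Finset.mem_Ioi.2 ?_, Equiv.apply_symm_apply _ _⟩
        have hmem : σ.symm x ∈ V := Finset.mem_image_of_mem _ hxL
        exact lt_of_le_of_ne (V.min'_le _ hmem)
          (fun hvx => hxj (by rw [hvx, Equiv.apply_symm_apply]))
      have hchain1 : r_G ≤ rate h c {σ v} ((Finset.Ioi v).image σ) := hu₀ v (le_trans hvu hu)
      have hchain2 : rate h c {σ v} ((Finset.Ioi v).image σ) ≤ rate h c {σ v} (L \ {σ v}) :=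
        rate_anti h hc (σ v) hsub
      have hchain3 : rate h c {σ v} (L \ {σ v}) ≤ rate h c {e u} (L \ {e u}) := hgreedy u (σ v) hjL
      have hEq : L \ {e u} = (Finset.Ioi u).image e := image_Ici_sdiff e u
      rw [hEq] at hchain3
      linarith
    have h1 : Fσ ⊆ Finset.Iic u₀ := fun x hx => Finset.mem_Iic.2 (Fσ.le_max' x hx)
    have h2 : Finset.Iic u₀ ⊆ Fe := by
      intro u hu
      rw [hFe, Finset.mem_filter]
      exact ⟨Finset.mem_univ _, fun v hv => main v (le_trans hv (Finset.mem_Iic.1 hu))⟩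
    exact (Finset.card_le_card h1).trans (Finset.card_le_card h2)
end
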